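/- For every real t with |t| < 1, Li_{(2)}(t)² = 4·Li_{(3,1)}(t) + 2·Li_{(2,2)}(t). -/

import Mathlib

open Finset

private lemma Li2aux_refl (n : ℕ) (g : ℕ → ℝ) :
    ∑ k ∈ range (n+1), g (n - k) = ∑ k ∈ range (n+1), g k := by
  simpa using Finset.sum_range_reflect g (n+1)

private lemma Li2aux_key (t : ℝ) (n : ℕ) :
    ∑ k ∈ range (n+1), t^(n+2) / (((k:ℝ)+1)^2 * (((n-k : ℕ):ℝ)+1)^2)
    = ∑ j ∈ range (n+1),
        (4 * (t^(n+2) / (((n:ℝ)+2)^3 * ((j:ℝ)+1)))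
          + 2 * (t^(n+2) / (((n:ℝ)+2)^2 * ((j:ℝ)+1)^2))) := by
  set P : ℕ → ℝ := fun j =>
    t^(n+2) / (((n:ℝ)+2)^2 * ((j:ℝ)+1)^2) + 2 * t^(n+2) / (((n:ℝ)+2)^3 * ((j:ℝ)+1)) with hP
  have hsplit : ∀ k ∈ range (n+1),
      t^(n+2) / (((k:ℝ)+1)^2 * (((n-k : ℕ):ℝ)+1)^2) = P k + P (n-k) := by
    intro k hk
    have hk' : k ≤ n := Nat.lt_succ_iff.mp (mem_range.mp hk)
    have hc : ((n-k : ℕ):ℝ) = (n:ℝ) - k := by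
      push_cast [hk']; ring
    rw [hP]; simp only []
    rw [hc]
    have hkn : (k:ℝ) ≤ (n:ℝ) := Nat.cast_le.mpr hk'
    have h1 : ((k:ℝ)+1) ≠ 0 := by positivity
    have h2 : ((n:ℝ) - k + 1) ≠ 0 := by intro h; nlinarith
    have h3 : ((n:ℝ)+2) ≠ 0 := by positivity
    field_simp
    ring
  rw [Finset.sum_congr rfl hsplit, Finset.sum_add_distrib, Li2aux_refl n P, ← two_mul,
    Finset.mul_sum]
  refine Finset.sum_congr rfl fun j _ => ?_
  rw [hP]; ring

private lemma Li2aux_summable_coeff (t : ℝ) (ht : |t| < 1)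
    (c : ℕ → ℝ) (hc : ∀ n, ‖c n‖ ≤ ((n:ℝ)+1) * |t|^n) : Summable c := by
  refine Summable.of_norm_bounded (g := fun n : ℕ => ((n:ℝ)+1) * |t|^n) ?_ hc
  have h1 : Summable (fun n : ℕ => (n:ℝ) * |t|^n) := by
    have := summable_pow_mul_geometric_of_norm_lt_one (R := ℝ) 1
      (r := |t|) (by rwa [Real.norm_eq_abs, abs_abs])
    simpa using this
  have h2 : Summable (fun n : ℕ => |t|^n) := summable_geometric_of_lt_one (abs_nonneg t) ht
  have := h1.add h2
  refine this.congr fun n => by ring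

private lemma Li2aux_termbound (t : ℝ) (a b n k : ℕ) (hn : 1 ≤ n) (hk : 1 ≤ k) :
    ‖t^n / ((n:ℝ)^a * (k:ℝ)^b)‖ ≤ |t|^n := by
  have hna : (1:ℝ) ≤ (n:ℝ)^a := one_le_pow₀ (by exact_mod_cast hn)
  have hkb : (1:ℝ) ≤ (k:ℝ)^b := one_le_pow₀ (by exact_mod_cast hk)
  rw [Real.norm_eq_abs, abs_div, abs_pow]
  have hd : |(n:ℝ)^a * (k:ℝ)^b| = (n:ℝ)^a * (k:ℝ)^b := abs_of_nonneg (by positivity)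
  rw [hd]
  calc |t|^n / ((n:ℝ)^a * (k:ℝ)^b) ≤ |t|^n / 1 :=
        div_le_div_of_nonneg_left (by positivity) one_pos (by nlinarith)
    _ = |t|^n := by ring

private lemma Li2aux_rhs (t : ℝ) (ht : |t| < 1) (a b : ℕ) :
    ∑' p : {p : ℕ × ℕ // p.2 < p.1 ∧ 1 ≤ p.2}, t ^ p.1.1 / ((p.1.1:ℝ)^a * (p.1.2:ℝ)^b)
    = ∑' n : ℕ, ∑ j ∈ range (n+1), t^(n+2) / (((n:ℝ)+2)^a * ((j:ℝ)+1)^b) := by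
  classical
  set s : Set (ℕ × ℕ) := {p | p.2 < p.1 ∧ 1 ≤ p.2} with hs
  set f : ℕ × ℕ → ℝ := s.indicator (fun p => t ^ p.1 / ((p.1:ℝ)^a * (p.2:ℝ)^b)) with hf
  have hfval : ∀ n k, f (n, k) =
      if k < n ∧ 1 ≤ k then t ^ n / ((n:ℝ)^a * (k:ℝ)^b) else 0 := by
    intro n k
    rw [hf, Set.indicator_apply]
    rfl
  have hfzero : ∀ n k, k ∉ Finset.Ico 1 n → f (n, k) = 0 := by
    intro n k hk
    rw [hfval]
    rw [Finset.mem_Ico] at hk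
    rw [if_neg]; tauto
  have hslice : ∀ n : ℕ, ∑' k, f (n, k) = ∑ k ∈ Finset.Ico 1 n, t ^ n / ((n:ℝ)^a * (k:ℝ)^b) := by
    intro n
    rw [tsum_eq_sum (hfzero n)]
    refine Finset.sum_congr rfl fun k hk => ?_
    rw [Finset.mem_Ico] at hk
    rw [hfval, if_pos ⟨hk.2, hk.1⟩]
  have hfabs : Summable fun p => |f p| := by
    rw [summable_prod_of_nonneg (fun p => abs_nonneg _)]
    constructor
    · intro n
      apply summable_of_ne_finset_zero (s := Finset.Ico 1 n)
      intro k hk; rw [hfzero n k hk, abs_zero]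
    · apply Li2aux_summable_coeff t ht
      intro n
      have h1 : ∑' k, |f (n, k)| = ∑ k ∈ Finset.Ico 1 n, |f (n, k)| :=
        tsum_eq_sum (fun k hk => by rw [hfzero n k hk, abs_zero])
      rw [Real.norm_eq_abs, h1, abs_of_nonneg (Finset.sum_nonneg fun _ _ => abs_nonneg _)]
      calc ∑ k ∈ Finset.Ico 1 n, |f (n, k)| ≤ ∑ k ∈ Finset.Ico 1 n, |t|^n := by
            refine Finset.sum_le_sum fun k hk => ?_
            rw [Finset.mem_Ico] at hk
            rw [hfval, if_pos ⟨hk.2, hk.1⟩, ← Real.norm_eq_abs]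
            exact Li2aux_termbound t a b n k (le_trans hk.1 hk.2.le) hk.1
        _ = (Finset.Ico 1 n).card * |t|^n := by rw [Finset.sum_const, nsmul_eq_mul]
        _ ≤ ((n:ℝ)+1) * |t|^n := by
            have : ((Finset.Ico 1 n).card : ℝ) ≤ (n:ℝ)+1 := by
              rw [Nat.card_Ico]
              have : (n - 1 : ℕ) ≤ n + 1 := by omega
              exact_mod_cast this
            exact mul_le_mul_of_nonneg_right this (by positivity)
  have hfsum : Summable f := summable_abs_iff.mp hfabs
  have h0 : (∑' p : {p : ℕ × ℕ // p.2 < p.1 ∧ 1 ≤ p.2},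
      t ^ p.1.1 / ((p.1.1:ℝ)^a * (p.1.2:ℝ)^b)) = ∑' p : ℕ × ℕ, f p :=
    tsum_subtype s (fun p => t ^ p.1 / ((p.1:ℝ)^a * (p.2:ℝ)^b))
  rw [h0, Summable.tsum_prod' hfsum (fun n => summable_of_ne_finset_zero (hfzero n))]
  simp_rw [hslice]
  set G : ℕ → ℝ := fun n => ∑ k ∈ Finset.Ico 1 n, t ^ n / ((n:ℝ)^a * (k:ℝ)^b) with hG
  have hGsum : Summable G := by
    apply Li2aux_summable_coeff t ht
    intro n
    calc ‖G n‖ ≤ ∑ k ∈ Finset.Ico 1 n, ‖t ^ n / ((n:ℝ)^a * (k:ℝ)^b)‖ := norm_sum_le _ _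
      _ ≤ ∑ k ∈ Finset.Ico 1 n, |t|^n := by
          refine Finset.sum_le_sum fun k hk => ?_
          rw [Finset.mem_Ico] at hk
          exact Li2aux_termbound t a b n k (le_trans hk.1 hk.2.le) hk.1
      _ = (Finset.Ico 1 n).card * |t|^n := by rw [Finset.sum_const, nsmul_eq_mul]
      _ ≤ ((n:ℝ)+1) * |t|^n := by
          have : ((Finset.Ico 1 n).card : ℝ) ≤ (n:ℝ)+1 := by
            rw [Nat.card_Ico]
            have : (n - 1 : ℕ) ≤ n + 1 := by omega
            exact_mod_cast this
          exact mul_le_mul_of_nonneg_right this (by positivity)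
  rw [Summable.tsum_eq_zero_add hGsum, Summable.tsum_eq_zero_add ((summable_nat_add_iff 1).mpr hGsum)]
  have hG0 : G 0 = 0 := by simp [hG]
  have hG1 : G (0 + 1) = 0 := by simp [hG]
  rw [hG0, hG1, zero_add, zero_add]
  refine tsum_congr fun n => ?_
  show ∑ k ∈ Finset.Ico 1 (n+1+1), t ^ (n+1+1) / (((n+1+1 : ℕ):ℝ)^a * (k:ℝ)^b) = _
  rw [Finset.sum_Ico_eq_sum_range]
  refine Finset.sum_congr (by norm_num) fun j _ => ?_
  push_cast
  ring_nf

private lemma Li2aux_sumAB (t : ℝ) (ht : |t| < 1) (a b : ℕ) :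
    Summable (fun n : ℕ => ∑ j ∈ range (n+1), t^(n+2) / (((n:ℝ)+2)^a * ((j:ℝ)+1)^b)) := by
  apply Li2aux_summable_coeff t ht
  intro n
  calc ‖∑ j ∈ range (n+1), t^(n+2) / (((n:ℝ)+2)^a * ((j:ℝ)+1)^b)‖
      ≤ ∑ j ∈ range (n+1), ‖t^(n+2) / (((n:ℝ)+2)^a * ((j:ℝ)+1)^b)‖ := norm_sum_le _ _
    _ ≤ ∑ j ∈ range (n+1), |t|^n := by
        refine Finset.sum_le_sum fun j _ => ?_
        have h := Li2aux_termbound t a b (n+2) (j+1) (by omega) (by omega)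
        push_cast at h
        refine h.trans (pow_le_pow_of_le_one (abs_nonneg t) ht.le (by omega))
    _ = ((n:ℝ)+1) * |t|^n := by
        rw [Finset.sum_const, nsmul_eq_mul, Finset.card_range]; push_cast; ring

/-- For `|t| < 1`, `Li₂(t)² = 4·Li_{(3,1)}(t) + 2·Li_{(2,2)}(t)`. -/
theorem Li2_sq_eq (t : ℝ) (ht : |t| < 1) :
    (∑' k : ℕ, t ^ (k + 1) / ((k : ℝ) + 1) ^ 2) ^ 2 =
      4 * ∑' p : {p : ℕ × ℕ // p.2 < p.1 ∧ 1 ≤ p.2},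
            t ^ p.1.1 / ((p.1.1 : ℝ) ^ 3 * (p.1.2 : ℝ)) +
      2 * ∑' p : {p : ℕ × ℕ // p.2 < p.1 ∧ 1 ≤ p.2},
            t ^ p.1.1 / ((p.1.1 : ℝ) ^ 2 * (p.1.2 : ℝ) ^ 2) := by
  classical
  have ha : Summable fun k : ℕ => ‖t ^ (k + 1) / ((k : ℝ) + 1) ^ 2‖ := by
    refine Summable.of_nonneg_of_le (fun k => norm_nonneg _) (fun k => ?_)
      (summable_geometric_of_lt_one (abs_nonneg t) ht)
    rw [Real.norm_eq_abs, abs_div, abs_pow, abs_pow]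
    have h1 : |(k:ℝ) + 1| = (k:ℝ) + 1 := abs_of_nonneg (by positivity)
    rw [h1]
    have h2 : (1:ℝ) ≤ ((k:ℝ)+1)^2 := one_le_pow₀ (by linarith [Nat.cast_nonneg (α := ℝ) k])
    calc |t|^(k+1) / ((k:ℝ)+1)^2 ≤ |t|^(k+1) / 1 :=
          div_le_div_of_nonneg_left (by positivity) one_pos h2
      _ = |t|^(k+1) := by ring
      _ ≤ |t|^k := pow_le_pow_of_le_one (abs_nonneg t) ht.le (by omega)
  rw [sq, tsum_mul_tsum_eq_tsum_sum_antidiagonal_of_summable_norm ha ha]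
  -- rewrite the two subtype sums
  have e1 : (∑' p : {p : ℕ × ℕ // p.2 < p.1 ∧ 1 ≤ p.2},
        t ^ p.1.1 / ((p.1.1 : ℝ) ^ 3 * (p.1.2 : ℝ)))
      = ∑' n : ℕ, ∑ j ∈ range (n+1), t^(n+2) / (((n:ℝ)+2)^3 * ((j:ℝ)+1)^1) := by
    rw [← Li2aux_rhs t ht 3 1]
    exact tsum_congr fun p => by rw [pow_one]
  have e2 : (∑' p : {p : ℕ × ℕ // p.2 < p.1 ∧ 1 ≤ p.2},
        t ^ p.1.1 / ((p.1.1 : ℝ) ^ 2 * (p.1.2 : ℝ) ^ 2))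
      = ∑' n : ℕ, ∑ j ∈ range (n+1), t^(n+2) / (((n:ℝ)+2)^2 * ((j:ℝ)+1)^2) :=
    Li2aux_rhs t ht 2 2
  rw [e1, e2, ← tsum_mul_left, ← tsum_mul_left,
    ← Summable.tsum_add ((Li2aux_sumAB t ht 3 1).mul_left 4) ((Li2aux_sumAB t ht 2 2).mul_left 2)]
  refine tsum_congr fun n => ?_
  rw [Finset.Nat.sum_antidiagonal_eq_sum_range_succ_mk]
  have hL : ∑ k ∈ range (n+1),
      (t ^ (k + 1) / ((k : ℝ) + 1) ^ 2) * (t ^ (n - k + 1) / (((n - k : ℕ) : ℝ) + 1) ^ 2)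
      = ∑ k ∈ range (n+1), t^(n+2) / (((k:ℝ)+1)^2 * (((n-k : ℕ):ℝ)+1)^2) := by
    refine Finset.sum_congr rfl fun k hk => ?_
    have hk' : k ≤ n := Nat.lt_succ_iff.mp (mem_range.mp hk)
    rw [div_mul_div_comm, ← pow_add]
    congr 2
    omega
  rw [hL, Li2aux_key t n, Finset.mul_sum, Finset.mul_sum, ← Finset.sum_add_distrib]
  refine Finset.sum_congr rfl fun j _ => ?_
  rw [pow_one]
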